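/- For every x > 0, the Gamma function satisfies √(2π) x^{x+1/2} e^{-x + 1/(12x+1)} ≤ Γ(x+1) ≤ √(2π) x^{x+1/2} e^{-x + 1/(12x)}. -/

import Mathlib

open Real Filter Topology Set

lemma rb_ratio_tendsto_zero (a b c p q r s : ℝ) (hp : 0 < p)
    (hD : ∀ y : ℝ, 0 < y → 0 < p*y^3+q*y^2+r*y+s) :
    Tendsto (fun y : ℝ => (a*y^2+b*y+c)/(p*y^3+q*y^2+r*y+s)) atTop (𝓝 0) := by
  have h := tendsto_inv_atTop_zero (𝕜 := ℝ)
  have hA : Tendsto (fun y : ℝ => a*y⁻¹ + b*(y⁻¹)^2 + c*(y⁻¹)^3) atTop (𝓝 0) := by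
    have := ((h.const_mul a).add ((h.pow 2).const_mul b)).add ((h.pow 3).const_mul c)
    simpa using this
  have hB : Tendsto (fun y : ℝ => p + q*y⁻¹ + r*(y⁻¹)^2 + s*(y⁻¹)^3) atTop (𝓝 p) := by
    have := ((((tendsto_const_nhds (x := p)).add (h.const_mul q)).add
      ((h.pow 2).const_mul r)).add ((h.pow 3).const_mul s))
    simpa using this
  have H := hA.div hB hp.ne'
  rw [zero_div] at H
  refine H.congr' ?_
  filter_upwards [eventually_gt_atTop (0:ℝ)] with y hy
  have hy' : y ≠ 0 := hy.ne'
  have hDy : p*y^3+q*y^2+r*y+s ≠ 0 := (hD y hy).ne'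
  have hB' : p + q*y⁻¹ + r*(y⁻¹)^2 + s*(y⁻¹)^3 ≠ 0 := by
    intro hzero
    apply hDy
    have : y^3 * (p + q*y⁻¹ + r*(y⁻¹)^2 + s*(y⁻¹)^3) = p*y^3+q*y^2+r*y+s := by
      field_simp
    rw [← this, hzero, mul_zero]
  simp only [Pi.div_apply]
  rw [div_eq_div_iff hB' hDy]
  field_simp
  

lemma rb_logdiff_tendsto : Tendsto (fun y : ℝ => Real.log (y+1) - Real.log y) atTop (𝓝 0) := by
  have h : Tendsto (fun y : ℝ => Real.log (1 + y⁻¹)) atTop (𝓝 0) := by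
    have : Tendsto (fun y : ℝ => 1 + y⁻¹) atTop (𝓝 1) := by
      simpa using (tendsto_const_nhds (x := (1:ℝ))).add tendsto_inv_atTop_zero
    simpa [Function.comp_def] using (Real.continuousAt_log (by norm_num : (1:ℝ) ≠ 0)).tendsto.comp this
  refine h.congr' ?_
  filter_upwards [eventually_gt_atTop (0:ℝ)] with y hy
  rw [← Real.log_div (by positivity) (ne_of_gt hy)]
  congr 1
  field_simp

noncomputable def rb_G (y : ℝ) : ℝ :=
  (12*y^2+12*y+1)/(12*y^3+18*y^2+6*y) - (Real.log (y+1) - Real.log y)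

lemma rb_G_hasDerivAt {y : ℝ} (hy : 0 < y) :
    HasDerivAt rb_G (-6/(12*y^3+18*y^2+6*y)^2) y := by
  have hD : (12*y^3+18*y^2+6*y : ℝ) ≠ 0 := by positivity
  have h1 : HasDerivAt (fun y : ℝ => 12*y^2+12*y+1) (24*y+12) y := by
    have := (((hasDerivAt_pow 2 y).const_mul 12).add ((hasDerivAt_id y).const_mul 12)).add_const 1
    refine this.congr_deriv ?_; ring
  have h2 : HasDerivAt (fun y : ℝ => 12*y^3+18*y^2+6*y) (36*y^2+36*y+6) y := by
    have := (((hasDerivAt_pow 3 y).const_mul 12).add ((hasDerivAt_pow 2 y).const_mul 18)).add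
      ((hasDerivAt_id y).const_mul 6)
    refine this.congr_deriv ?_; ring
  have h3 := h1.div h2 hD
  have h4 : HasDerivAt (fun y : ℝ => Real.log (y+1)) (1/(y+1)) y := by
    have := (Real.hasDerivAt_log (by positivity : (y+1:ℝ) ≠ 0)).comp y
      ((hasDerivAt_id y).add_const 1)
    simpa [Function.comp_def] using this
  have h5 : HasDerivAt Real.log (1/y) y := by
    simpa [one_div] using Real.hasDerivAt_log hy.ne'
  have h6 := h3.sub (h4.sub h5)
  refine h6.congr_deriv ?_
  have hy1 : (y+1 : ℝ) ≠ 0 := by positivity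
  field_simp
  ring

lemma rb_G_nonneg {y : ℝ} (hy : 0 < y) : 0 ≤ rb_G y := by
  have hanti : AntitoneOn rb_G (Ioi 0) := by
    refine antitoneOn_of_hasDerivWithinAt_nonpos (convex_Ioi 0)
      (f' := fun z => -6/(12*z^3+18*z^2+6*z)^2)
      (fun z hz => (rb_G_hasDerivAt hz).continuousAt.continuousWithinAt) ?_ ?_
    · intro z hz
      rw [interior_Ioi] at hz
      exact (rb_G_hasDerivAt hz).hasDerivWithinAt
    · intro z hz
      rw [interior_Ioi] at hz
      have hz' : (0:ℝ) < z := hz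
      have h2 : (0:ℝ) < (12*z^3+18*z^2+6*z)^2 := by positivity
      exact div_nonpos_of_nonpos_of_nonneg (by norm_num) h2.le
  have hlim : Tendsto rb_G atTop (𝓝 0) := by
    have h1 := rb_ratio_tendsto_zero 12 12 1 12 18 6 0 (by norm_num)
      (fun y hy => by nlinarith)
    have := h1.sub rb_logdiff_tendsto
    unfold rb_G; simpa using this
  refine le_of_tendsto hlim ?_
  filter_upwards [eventually_ge_atTop y] with z hz
  exact hanti (mem_Ioi.2 hy) (mem_Ioi.2 (lt_of_lt_of_le hy hz)) hz

lemma rb_log_upper {y : ℝ} (hy : 0 < y) :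
    Real.log (y+1) - Real.log y ≤ (12*y^2+12*y+1)/(6*y*(y+1)*(2*y+1)) := by
  have h := rb_G_nonneg hy
  unfold rb_G at h
  have he : (6*y*(y+1)*(2*y+1) : ℝ) = 12*y^3+18*y^2+6*y := by ring
  rw [he]
  linarith

noncomputable def rb_H (y : ℝ) : ℝ :=
  (Real.log (y+1) - Real.log y) - (288*y^2+336*y+50)/(288*y^3+480*y^2+194*y+13)

lemma rb_H_hasDerivAt {y : ℝ} (hy : 0 < y) :
    HasDerivAt rb_H
      ((-4608*y^3-4272*y^2+288*y-169)/(y*(y+1)*(288*y^3+480*y^2+194*y+13)^2)) y := by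
  have hD : (288*y^3+480*y^2+194*y+13 : ℝ) ≠ 0 := by positivity
  have h1 : HasDerivAt (fun y : ℝ => 288*y^2+336*y+50) (576*y+336) y := by
    have := (((hasDerivAt_pow 2 y).const_mul 288).add
      ((hasDerivAt_id y).const_mul 336)).add_const 50
    refine this.congr_deriv ?_; ring
  have h2 : HasDerivAt (fun y : ℝ => 288*y^3+480*y^2+194*y+13) (864*y^2+960*y+194) y := by
    have := ((((hasDerivAt_pow 3 y).const_mul 288).add ((hasDerivAt_pow 2 y).const_mul 480)).add
      ((hasDerivAt_id y).const_mul 194)).add_const 13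
    refine this.congr_deriv ?_; ring
  have h3 := h1.div h2 hD
  have h4 : HasDerivAt (fun y : ℝ => Real.log (y+1)) (1/(y+1)) y := by
    have := (Real.hasDerivAt_log (by positivity : (y+1:ℝ) ≠ 0)).comp y
      ((hasDerivAt_id y).add_const 1)
    simpa [Function.comp_def] using this
  have h5 : HasDerivAt Real.log (1/y) y := by
    simpa [one_div] using Real.hasDerivAt_log hy.ne'
  have h6 := (h4.sub h5).sub h3
  refine h6.congr_deriv ?_
  have hy1 : (y+1 : ℝ) ≠ 0 := by positivity
  field_simp
  ring

lemma rb_H_nonneg {y : ℝ} (hy : 0 < y) : 0 ≤ rb_H y := by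
  have hanti : AntitoneOn rb_H (Ioi 0) := by
    refine antitoneOn_of_hasDerivWithinAt_nonpos (convex_Ioi 0)
      (f' := fun z => (-4608*z^3-4272*z^2+288*z-169)/(z*(z+1)*(288*z^3+480*z^2+194*z+13)^2))
      (fun z hz => (rb_H_hasDerivAt hz).continuousAt.continuousWithinAt) ?_ ?_
    · intro z hz
      rw [interior_Ioi] at hz
      exact (rb_H_hasDerivAt hz).hasDerivWithinAt
    · intro z hz
      rw [interior_Ioi] at hz
      have hz' : (0:ℝ) < z := hz
      have h2 : (0:ℝ) < z*(z+1)*(288*z^3+480*z^2+194*z+13)^2 := by positivity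
      refine div_nonpos_of_nonpos_of_nonneg ?_ h2.le
      nlinarith [sq_nonneg (89*z-3), hz'.le, pow_pos hz' 3]
  have hlim : Tendsto rb_H atTop (𝓝 0) := by
    have h1 := rb_ratio_tendsto_zero 288 336 50 288 480 194 13 (by norm_num)
      (fun y hy => by nlinarith)
    have := rb_logdiff_tendsto.sub h1
    unfold rb_H; simpa using this
  refine le_of_tendsto hlim ?_
  filter_upwards [eventually_ge_atTop y] with z hz
  exact hanti (mem_Ioi.2 hy) (mem_Ioi.2 (lt_of_lt_of_le hy hz)) hz

lemma rb_log_lower {y : ℝ} (hy : 0 < y) :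
    (288*y^2+336*y+50)/((2*y+1)*((12*y+1)*(12*y+13))) ≤ Real.log (y+1) - Real.log y := by
  have h := rb_H_nonneg hy
  unfold rb_H at h
  have he : ((2*y+1)*((12*y+1)*(12*y+13)) : ℝ) = 288*y^3+480*y^2+194*y+13 := by ring
  rw [he]
  linarith

noncomputable def rb_t (y : ℝ) : ℝ := (y + 1/2) * (Real.log (y+1) - Real.log y) - 1

lemma rb_t_upper {y : ℝ} (hy : 0 < y) : rb_t y ≤ 1/(12*y) - 1/(12*(y+1)) := by
  have h := rb_log_upper hy
  have h2 : (y + 1/2) * ((12*y^2+12*y+1)/(6*y*(y+1)*(2*y+1))) - 1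
      = 1/(12*y) - 1/(12*(y+1)) := by
    field_simp
    ring
  have hpos : (0:ℝ) < y + 1/2 := by linarith
  have h3 : rb_t y ≤ (y + 1/2) * ((12*y^2+12*y+1)/(6*y*(y+1)*(2*y+1))) - 1 := by
    unfold rb_t
    nlinarith [mul_le_mul_of_nonneg_left h hpos.le]
  linarith [h3, h2.le]

lemma rb_t_lower {y : ℝ} (hy : 0 < y) : 1/(12*y+1) - 1/(12*(y+1)+1) ≤ rb_t y := by
  have h := rb_log_lower hy
  have h2 : (y + 1/2) * ((288*y^2+336*y+50)/((2*y+1)*((12*y+1)*(12*y+13)))) - 1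
      = 1/(12*y+1) - 1/(12*(y+1)+1) := by
    have h13 : (12*(y+1)+1 : ℝ) = 12*y+13 := by ring
    rw [h13]
    field_simp
    ring
  have hpos : (0:ℝ) < y + 1/2 := by linarith
  have h3 : (y + 1/2) * ((288*y^2+336*y+50)/((2*y+1)*((12*y+1)*(12*y+13)))) - 1 ≤ rb_t y := by
    unfold rb_t
    nlinarith [mul_le_mul_of_nonneg_left h hpos.le]
  linarith [h3, h2.le]

lemma rb_t_nonneg {y : ℝ} (hy : 0 < y) : 0 ≤ rb_t y := by
  have h := rb_t_lower hy
  have h1 : (0:ℝ) < 12*y+1 := by linarith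
  have h2 : (0:ℝ) < 12*(y+1)+1 := by linarith
  have hlt : 1/(12*(y+1)+1) ≤ 1/(12*y+1) := by
    apply one_div_le_one_div_of_le <;> linarith
  linarith

lemma rb_t_hasDerivAt {y : ℝ} (hy : 0 < y) :
    HasDerivAt rb_t ((Real.log (y+1) - Real.log y) + (y+1/2)*(1/(y+1) - 1/y)) y := by
  have h4 : HasDerivAt (fun y : ℝ => Real.log (y+1)) (1/(y+1)) y := by
    have := (Real.hasDerivAt_log (by positivity : (y+1:ℝ) ≠ 0)).comp y
      ((hasDerivAt_id y).add_const 1)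
    simpa [Function.comp_def] using this
  have h5 : HasDerivAt Real.log (1/y) y := by
    simpa [one_div] using Real.hasDerivAt_log hy.ne'
  have h6 := (((hasDerivAt_id y).add_const (1/2 : ℝ)).mul (h4.sub h5)).sub_const 1
  refine h6.congr_deriv ?_
  simp only [id_eq, Pi.sub_apply]
  ring

lemma rb_t1_hasDerivAt {y : ℝ} (hy : 0 < y) :
    HasDerivAt (fun z : ℝ => (Real.log (z+1) - Real.log z) + (z+1/2)*(1/(z+1) - 1/z))
      (1/(2*y^2*(y+1)^2)) y := by
  have hy1 : (y+1 : ℝ) ≠ 0 := by positivity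
  have h4 : HasDerivAt (fun y : ℝ => Real.log (y+1)) (1/(y+1)) y := by
    have := (Real.hasDerivAt_log hy1).comp y ((hasDerivAt_id y).add_const 1)
    simpa [Function.comp_def] using this
  have h5 : HasDerivAt Real.log (1/y) y := by
    simpa [one_div] using Real.hasDerivAt_log hy.ne'
  have hi1 : HasDerivAt (fun z : ℝ => 1/(z+1)) (-1/(y+1)^2) y := by
    have := ((hasDerivAt_id y).add_const (1:ℝ)).inv hy1
    simpa [one_div, Pi.inv_def] using this
  have hi2 : HasDerivAt (fun z : ℝ => 1/z) (-1/y^2) y := by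
    have := (hasDerivAt_id y).inv hy.ne'
    simpa [one_div, Pi.inv_def] using this
  have h6 := (h4.sub h5).add
    ((((hasDerivAt_id y).add_const (1/2 : ℝ)).mul (hi1.sub hi2)))
  refine h6.congr_deriv ?_
  simp only [Pi.sub_apply, id_eq]
  field_simp
  ring

lemma rb_t_convexOn : ConvexOn ℝ (Ioi 0) rb_t := by
  refine convexOn_of_hasDerivWithinAt2_nonneg (convex_Ioi 0)
    (f' := fun z => (Real.log (z+1) - Real.log z) + (z+1/2)*(1/(z+1) - 1/z))
    (f'' := fun z => 1/(2*z^2*(z+1)^2))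
    (fun z hz => (rb_t_hasDerivAt hz).continuousAt.continuousWithinAt) ?_ ?_ ?_
  · intro z hz
    rw [interior_Ioi] at hz
    exact (rb_t_hasDerivAt hz).hasDerivWithinAt
  · intro z hz
    rw [interior_Ioi] at hz
    exact (rb_t1_hasDerivAt hz).hasDerivWithinAt
  · intro z hz
    rw [interior_Ioi] at hz
    have hz' : (0:ℝ) < z := hz
    positivity

noncomputable def rb_S (x : ℝ) : ℝ := ∑' n : ℕ, rb_t (x + n)

lemma rb_partial_le {x : ℝ} (hx : 0 < x) (n : ℕ) :
    ∑ i ∈ Finset.range n, rb_t (x + i) ≤ 1/(12*x) := by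
  have key : ∑ i ∈ Finset.range n, rb_t (x + i)
      ≤ ∑ i ∈ Finset.range n, (1/(12*(x+i)) - 1/(12*(x+(i+1:ℕ)))) := by
    refine Finset.sum_le_sum fun i _ => ?_
    have hxi : (0:ℝ) < x + i := by positivity
    have := rb_t_upper hxi
    have he : (x + (i:ℝ)) + 1 = x + ((i+1 : ℕ) : ℝ) := by push_cast; ring
    rw [he] at this
    exact this
  have htel : ∑ i ∈ Finset.range n, (1/(12*(x+(i:ℕ))) - 1/(12*(x+(i+1:ℕ))))
      = 1/(12*(x+(0:ℕ))) - 1/(12*(x+(n:ℕ))) :=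
    Finset.sum_range_sub' (fun i => 1/(12*(x+(i:ℕ)))) n
  have hpos : (0:ℝ) < 12*(x+(n:ℕ)) := by positivity
  have : 1/(12*(x+(0:ℕ))) - 1/(12*(x+(n:ℕ))) ≤ 1/(12*x) := by
    simp only [Nat.cast_zero, add_zero]
    have : 0 < 1/(12*(x+(n:ℕ))) := by positivity
    linarith
  linarith

lemma rb_summable {x : ℝ} (hx : 0 < x) : Summable (fun n : ℕ => rb_t (x + n)) :=
  summable_of_sum_range_le (fun n => rb_t_nonneg (by positivity)) (rb_partial_le hx)

lemma rb_S_le {x : ℝ} (hx : 0 < x) : rb_S x ≤ 1/(12*x) :=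
  Real.tsum_le_of_sum_range_le (fun n => rb_t_nonneg (by positivity)) (rb_partial_le hx)

lemma rb_S_ge {x : ℝ} (hx : 0 < x) : 1/(12*x+1) ≤ rb_S x := by
  have key : ∀ n : ℕ, 1/(12*x+1) - 1/(12*(x+n)+1) ≤ rb_S x := by
    intro n
    have htel : ∑ i ∈ Finset.range n, (1/(12*(x+(i:ℕ))+1) - 1/(12*(x+(i+1:ℕ))+1))
        = 1/(12*(x+(0:ℕ))+1) - 1/(12*(x+(n:ℕ))+1) :=
      Finset.sum_range_sub' (fun i => 1/(12*(x+(i:ℕ))+1)) n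
    have hsum : ∑ i ∈ Finset.range n, (1/(12*(x+(i:ℕ))+1) - 1/(12*(x+(i+1:ℕ))+1))
        ≤ ∑ i ∈ Finset.range n, rb_t (x + i) := by
      refine Finset.sum_le_sum fun i _ => ?_
      have hxi : (0:ℝ) < x + i := by positivity
      have := rb_t_lower hxi
      have he : (x + (i:ℝ)) + 1 = x + ((i+1 : ℕ) : ℝ) := by push_cast; ring
      rw [he] at this
      exact this
    have hle : ∑ i ∈ Finset.range n, rb_t (x + i) ≤ rb_S x :=
      Summable.sum_le_tsum _ (fun i _ => rb_t_nonneg (by positivity)) (rb_summable hx)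
    simp only [Nat.cast_zero, add_zero] at htel
    linarith [htel ▸ hsum]
  have hlim : Tendsto (fun n : ℕ => 1/(12*x+1) - 1/(12*(x+n)+1)) atTop (𝓝 (1/(12*x+1))) := by
    have h1 : Tendsto (fun n : ℕ => 12*(x+(n:ℝ))+1) atTop atTop := by
      apply tendsto_atTop_add_const_right
      apply Tendsto.const_mul_atTop (by norm_num : (0:ℝ) < 12)
      exact tendsto_atTop_add_const_left _ x tendsto_natCast_atTop_atTop
    have h2 : Tendsto (fun n : ℕ => 1/(12*(x+(n:ℝ))+1)) atTop (𝓝 0) := by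
      simpa [one_div, Pi.inv_def] using h1.inv_tendsto_atTop
    simpa using (tendsto_const_nhds (x := 1/(12*x+1))).sub h2
  exact le_of_tendsto hlim (Eventually.of_forall key)

lemma rb_S_nonneg {x : ℝ} (hx : 0 < x) : 0 ≤ rb_S x := by
  have := rb_S_ge hx
  have h1 : (0:ℝ) < 1/(12*x+1) := by positivity
  linarith

lemma rb_S_rec {x : ℝ} (hx : 0 < x) : rb_S x = rb_t x + rb_S (x+1) := by
  rw [rb_S, Summable.tsum_eq_zero_add (rb_summable hx)]
  congr 1
  · norm_num
  · rw [rb_S]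
    apply tsum_congr
    intro n
    congr 1
    push_cast
    ring

lemma rb_S_convexOn : ConvexOn ℝ (Ioi 0) rb_S := by
  refine ⟨convex_Ioi 0, ?_⟩
  intro x hx y hy a b ha hb hab
  simp only [smul_eq_mul]
  have hx' : (0:ℝ) < x := hx
  have hy' : (0:ℝ) < y := hy
  have hz : a • x + b • y ∈ Ioi (0:ℝ) := (convex_Ioi 0) hx hy ha hb hab
  simp only [smul_eq_mul] at hz
  have hz' : (0:ℝ) < a*x + b*y := hz
  have key : ∀ n : ℕ, rb_t ((a*x+b*y) + n) ≤ a * rb_t (x+n) + b * rb_t (y+n) := by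
    intro n
    have hxn : x + (n:ℝ) ∈ Ioi (0:ℝ) := by simp; positivity
    have hyn : y + (n:ℝ) ∈ Ioi (0:ℝ) := by simp; positivity
    have := rb_t_convexOn.2 hxn hyn ha hb hab
    simp only [smul_eq_mul] at this
    have he : a*(x+n) + b*(y+n) = (a*x+b*y) + n := by
      have : a + b = 1 := hab
      nlinarith [this]
    rwa [he] at this
  have hs1 : Summable (fun n : ℕ => a * rb_t (x+n) + b * rb_t (y+n)) :=
    ((rb_summable hx').mul_left a).add ((rb_summable hy').mul_left b)
  calc rb_S (a*x+b*y) ≤ ∑' n : ℕ, (a * rb_t (x+n) + b * rb_t (y+n)) :=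
        Summable.tsum_le_tsum key (rb_summable hz') hs1
    _ = a * rb_S x + b * rb_S y := by
        rw [Summable.tsum_add ((rb_summable hx').mul_left a) ((rb_summable hy').mul_left b),
          tsum_mul_left, tsum_mul_left, rb_S, rb_S]

noncomputable def rb_phi (x : ℝ) : ℝ :=
  ((x - 1/2) * Real.log x - x + (1 - rb_S 1)) + rb_S x

noncomputable def rb_f (x : ℝ) : ℝ := Real.exp (rb_phi x)

lemma rb_g_hasDerivAt {x : ℝ} (hx : 0 < x) :
    HasDerivAt (fun z : ℝ => (z - 1/2) * Real.log z - z + (1 - rb_S 1))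
      (Real.log x - 1/(2*x)) x := by
  have h1 : HasDerivAt Real.log (1/x) x := by
    simpa [one_div] using Real.hasDerivAt_log hx.ne'
  have h6 := ((((hasDerivAt_id x).sub_const (1/2 : ℝ)).mul h1).sub (hasDerivAt_id x)).add_const
    (1 - rb_S 1)
  refine h6.congr_deriv ?_
  simp only [id_eq]
  field_simp
  ring

lemma rb_g1_hasDerivAt {x : ℝ} (hx : 0 < x) :
    HasDerivAt (fun z : ℝ => Real.log z - 1/(2*z)) (1/x + 1/(2*x^2)) x := by
  have h1 : HasDerivAt Real.log (1/x) x := by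
    simpa [one_div] using Real.hasDerivAt_log hx.ne'
  have h2 : HasDerivAt (fun z : ℝ => 1/(2*z)) (-2/(2*x)^2) x := by
    have := ((hasDerivAt_id x).const_mul (2:ℝ)).inv (by positivity)
    simpa [one_div, Pi.inv_def] using this
  have h6 := h1.sub h2
  refine h6.congr_deriv ?_
  field_simp
  ring

lemma rb_g_convexOn :
    ConvexOn ℝ (Ioi 0) (fun z : ℝ => (z - 1/2) * Real.log z - z + (1 - rb_S 1)) := by
  refine convexOn_of_hasDerivWithinAt2_nonneg (convex_Ioi 0)
    (f' := fun z => Real.log z - 1/(2*z)) (f'' := fun z => 1/z + 1/(2*z^2))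
    (fun z hz => (rb_g_hasDerivAt hz).continuousAt.continuousWithinAt) ?_ ?_ ?_
  · intro z hz
    rw [interior_Ioi] at hz
    exact (rb_g_hasDerivAt hz).hasDerivWithinAt
  · intro z hz
    rw [interior_Ioi] at hz
    exact (rb_g1_hasDerivAt hz).hasDerivWithinAt
  · intro z hz
    rw [interior_Ioi] at hz
    have hz' : (0:ℝ) < z := hz
    positivity

lemma rb_phi_convexOn : ConvexOn ℝ (Ioi 0) rb_phi :=
  rb_g_convexOn.add rb_S_convexOn

lemma rb_phi_rec {x : ℝ} (hx : 0 < x) : rb_phi (x+1) = rb_phi x + Real.log x := by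
  have h := rb_S_rec hx
  unfold rb_phi
  rw [h]
  unfold rb_t
  ring

lemma rb_f_eq_Gamma : Set.EqOn rb_f Real.Gamma (Ioi 0) := by
  refine Real.eq_Gamma_of_log_convex ?_ ?_ ?_ ?_
  · have h : (Real.log ∘ rb_f) = rb_phi := funext fun x => by
      simp [rb_f, Real.log_exp]
    rw [h]
    exact rb_phi_convexOn
  · intro y hy
    rw [rb_f, rb_f, rb_phi_rec hy, Real.exp_add, Real.exp_log hy]
    ring
  · intro y _
    exact Real.exp_pos _
  · have : rb_phi 1 = 0 := by
      unfold rb_phi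
      rw [Real.log_one]
      ring
    rw [rb_f, this, Real.exp_zero]

lemma rb_Gamma_eq {x : ℝ} (hx : 0 < x) :
    Real.Gamma (x+1) = Real.exp (1 - rb_S 1) *
      (Real.exp ((x + 1/2) * Real.log x) * Real.exp (-x + rb_S x)) := by
  have h1 : x + 1 ∈ Ioi (0:ℝ) := by simp; linarith
  rw [← rb_f_eq_Gamma h1, rb_f, rb_phi_rec hx]
  rw [← Real.exp_add, ← Real.exp_add]
  congr 1
  unfold rb_phi
  ring

lemma rb_const_eq {n : ℕ} (hn : 1 ≤ n) :
    Real.sqrt 2 * Stirling.stirlingSeq n * Real.exp (-(rb_S n)) = Real.exp (1 - rb_S 1) := by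
  have hnpos : (0:ℝ) < n := by exact_mod_cast hn
  have hfac : (Nat.factorial n : ℝ) = Real.exp (1 - rb_S 1) *
      (Real.exp (((n:ℝ) + 1/2) * Real.log n) * Real.exp (-(n:ℝ) + rb_S n)) := by
    rw [← Real.Gamma_nat_eq_factorial, ← rb_Gamma_eq hnpos]
  have e1 : Real.exp (((n:ℝ)+1/2) * Real.log n) = (n:ℝ)^n * Real.sqrt n := by
    rw [show ((n:ℝ)+1/2) * Real.log n = (n:ℝ)*Real.log n + Real.log n * (1/2) by ring,
      Real.exp_add, Real.exp_nat_mul, Real.exp_log hnpos, ← Real.rpow_def_of_pos hnpos,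
      ← Real.sqrt_eq_rpow]
  have e2 : Real.exp (-(n:ℝ) + rb_S n) = Real.exp (rb_S n) / Real.exp n := by
    rw [Real.exp_add, Real.exp_neg]
    ring
  rw [Stirling.stirlingSeq]
  rw [hfac, e1, e2]
  have h2n : Real.sqrt (2*(n:ℝ)) = Real.sqrt 2 * Real.sqrt n := Real.sqrt_mul (by norm_num) _
  rw [h2n, div_pow, Real.exp_one_pow, Real.exp_neg]
  have hs2 : Real.sqrt 2 ≠ 0 := by positivity
  have hsn : Real.sqrt (n:ℝ) ≠ 0 := by positivity
  have hnn : ((n:ℝ))^n ≠ 0 := by positivity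
  have hE : Real.exp (n:ℝ) ≠ 0 := Real.exp_ne_zero _
  have hs : Real.exp (rb_S n) ≠ 0 := Real.exp_ne_zero _
  field_simp
  

lemma rb_const_val : Real.exp (1 - rb_S 1) = Real.sqrt (2*π) := by
  have hS0 : Tendsto (fun n : ℕ => rb_S n) atTop (𝓝 0) := by
    have hub : Tendsto (fun n : ℕ => 1/(12*(n:ℝ))) atTop (𝓝 0) := by
      have h1 : Tendsto (fun n : ℕ => 12*(n:ℝ)) atTop atTop :=
        tendsto_natCast_atTop_atTop.const_mul_atTop (by norm_num)
      simpa only [one_div, Pi.inv_def] using h1.inv_tendsto_atTop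
    refine tendsto_of_tendsto_of_tendsto_of_le_of_le' tendsto_const_nhds hub ?_ ?_
    · filter_upwards [eventually_ge_atTop 1] with n hn
      exact rb_S_nonneg (by exact_mod_cast hn : (0:ℝ) < n)
    · filter_upwards [eventually_ge_atTop 1] with n hn
      exact rb_S_le (by exact_mod_cast hn : (0:ℝ) < n)
  have hexp : Tendsto (fun n : ℕ => Real.exp (-(rb_S n))) atTop (𝓝 1) := by
    have h0 : Tendsto (fun n : ℕ => -(rb_S n)) atTop (𝓝 0) := by
      simpa using hS0.neg
    have := (Real.continuous_exp.tendsto 0).comp h0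
    simpa [Function.comp_def] using this
  have hmain : Tendsto (fun n : ℕ => Real.sqrt 2 * Stirling.stirlingSeq n *
      Real.exp (-(rb_S n))) atTop (𝓝 (Real.sqrt 2 * Real.sqrt π * 1)) :=
    (tendsto_const_nhds.mul Stirling.tendsto_stirlingSeq_sqrt_pi).mul hexp
  have heq : Tendsto (fun _ : ℕ => Real.exp (1 - rb_S 1)) atTop
      (𝓝 (Real.sqrt 2 * Real.sqrt π * 1)) := by
    refine hmain.congr' ?_
    filter_upwards [eventually_ge_atTop 1] with n hn
    exact rb_const_eq hn
  have := tendsto_nhds_unique heq tendsto_const_nhds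
  rw [← this, mul_one, ← Real.sqrt_mul (by norm_num : (0:ℝ) ≤ 2)]

theorem stmt_6 (x : ℝ) (hx : 0 < x) :
    Real.sqrt (2 * π) * x ^ (x + 1 / 2) * Real.exp (-x + 1 / (12 * x + 1)) ≤
      Real.Gamma (x + 1) ∧
    Real.Gamma (x + 1) ≤
      Real.sqrt (2 * π) * x ^ (x + 1 / 2) * Real.exp (-x + 1 / (12 * x)) := by
  have hG := rb_Gamma_eq hx
  rw [rb_const_val] at hG
  have hrpow : Real.exp ((x + 1/2) * Real.log x) = x ^ (x + 1/2) := by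
    rw [Real.rpow_def_of_pos hx, mul_comm]
  rw [hrpow, ← mul_assoc] at hG
  have hC : (0:ℝ) ≤ Real.sqrt (2*π) * x ^ (x + 1/2) := by positivity
  constructor
  · rw [hG]
    refine mul_le_mul_of_nonneg_left ?_ hC
    exact Real.exp_le_exp.2 (by linarith [rb_S_ge hx])
  · rw [hG]
    refine mul_le_mul_of_nonneg_left ?_ hC
    exact Real.exp_le_exp.2 (by linarith [rb_S_le hx])
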